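/- Let G be a group, M a commutative monoid (written additively), and φ a filter on G. Then for all s, t ∈ M one has [φ_s⁺, φ_t] ≤ φ_{s+t}⁺ and [φ_s, φ_t⁺] ≤ φ_{s+t}⁺. -/

import Mathlib

/-- `φ_s⁺`, the subgroup generated by all `φ (s + t)` with `t ≠ 0`. -/
def filterPlus {M : Type*} [AddCommMonoid M] {G : Type*} [Group G]
    (φ : M → Subgroup G) (s : M) : Subgroup G :=
  ⨆ t ∈ {t : M | t ≠ 0}, φ (s + t)

/-- A filter on `G` over the commutative monoid `M`. -/
def IsFilter {M : Type*} [AddCommMonoid M] {G : Type*} [Group G]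
    (φ : M → Subgroup G) : Prop :=
  φ 0 = ⊤ ∧ ∀ s t : M, ⁅φ s, φ t⁆ ≤ φ (s + t) ∧ φ (s + t) ≤ φ s ⊓ φ t

open scoped commutatorElement

private lemma filterPlus_eq {M : Type*} [AddCommMonoid M] {G : Type*} [Group G]
    (φ : M → Subgroup G) (s : M) :
    filterPlus φ s = ⨆ u : {u : M // u ≠ 0}, φ (s + u.1) := by
  rw [filterPlus, iSup_subtype]
  rfl

private lemma le_filterPlus {M : Type*} [AddCommMonoid M] {G : Type*} [Group G]
    (φ : M → Subgroup G) (s : M) {u : M} (hu : u ≠ 0) : φ (s + u) ≤ filterPlus φ s := by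
  rw [filterPlus_eq]
  exact le_iSup (fun u : {u : M // u ≠ 0} => φ (s + u.1)) ⟨u, hu⟩

private lemma filter_normal {M : Type*} [AddCommMonoid M] {G : Type*} [Group G]
    {φ : M → Subgroup G} (hφ : IsFilter φ) (m : M) : (φ m).Normal := by
  constructor
  intro n hn g
  have key : ⁅g, n⁆ ∈ φ m := by
    have h1 : ⁅g, n⁆ ∈ ⁅φ 0, φ m⁆ :=
      Subgroup.commutator_mem_commutator (by rw [hφ.1]; trivial) hn
    have h2 := (hφ.2 0 m).1 h1
    rwa [zero_add] at h2
  have : g * n * g⁻¹ = ⁅g, n⁆ * n := by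
    simp only [commutatorElement_def]
    group
  rw [this]
  exact (φ m).mul_mem key hn

private lemma filterPlus_normal {M : Type*} [AddCommMonoid M] {G : Type*} [Group G]
    {φ : M → Subgroup G} (hφ : IsFilter φ) (s : M) : (filterPlus φ s).Normal := by
  constructor
  intro n hn g
  rw [filterPlus_eq] at hn ⊢
  refine Subgroup.iSup_induction _ hn (C := fun x => g * x * g⁻¹ ∈ _) ?_ ?_ ?_
  · rintro ⟨u, hu⟩ x hx
    exact le_iSup (fun u : {u : M // u ≠ 0} => φ (s + u.1)) ⟨u, hu⟩
      ((filter_normal hφ (s + u)).conj_mem x hx g)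
  · simpa using Subgroup.one_mem _
  · intro x y hx hy
    have : g * (x * y) * g⁻¹ = (g * x * g⁻¹) * (g * y * g⁻¹) := by group
    rw [this]
    exact Subgroup.mul_mem _ hx hy

private lemma key_lemma {M : Type*} [AddCommMonoid M] {G : Type*} [Group G]
    {φ : M → Subgroup G} (hφ : IsFilter φ) (s t : M) :
    ⁅filterPlus φ s, φ t⁆ ≤ filterPlus φ (s + t) := by
  have hN := filterPlus_normal hφ (s + t)
  rw [Subgroup.commutator_le]
  intro g hg h hh
  rw [filterPlus_eq] at hg
  refine Subgroup.iSup_induction _ hg (C := fun x => ⁅x, h⁆ ∈ filterPlus φ (s + t)) ?_ ?_ ?_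
  · rintro ⟨u, hu⟩ x hx
    have h1 : ⁅x, h⁆ ∈ ⁅φ (s + u), φ t⁆ := Subgroup.commutator_mem_commutator hx hh
    have h2 := (hφ.2 (s + u) t).1 h1
    have heq : s + u + t = s + t + u := by
      rw [add_assoc, add_comm u t, ← add_assoc]
    rw [heq] at h2
    exact le_filterPlus φ (s + t) hu h2
  · simpa using Subgroup.one_mem _
  · intro x y hx hy
    have : ⁅x * y, h⁆ = (x * ⁅y, h⁆ * x⁻¹) * ⁅x, h⁆ := by
      simp only [commutatorElement_def]
      group
    rw [this]
    exact Subgroup.mul_mem _ (hN.conj_mem _ hy x) hx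

theorem statement0 {G : Type*} [Group G] {M : Type*} [AddCommMonoid M]
    (φ : M → Subgroup G) (hφ : IsFilter φ) (s t : M) :
    ⁅filterPlus φ s, φ t⁆ ≤ filterPlus φ (s + t) ∧
      ⁅φ s, filterPlus φ t⁆ ≤ filterPlus φ (s + t) := by
  refine ⟨key_lemma hφ s t, ?_⟩
  calc ⁅φ s, filterPlus φ t⁆ ≤ ⁅filterPlus φ t, φ s⁆ := Subgroup.commutator_comm_le _ _
    _ ≤ filterPlus φ (t + s) := key_lemma hφ t s
    _ = filterPlus φ (s + t) := by rw [add_comm]
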